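/- Fix an integer d ≥ 3. Let ε₁, ε₂ be real random variables on a probability space with E[ε₁] = E[ε₂] = 0, E[|ε₁|^d] < ∞, E[|ε₂|^d] < ∞, E[ε₁·ε₂] = 0, and E[ε₁^{d−1}·ε₂] = 0, and let B ∈ ℝ. Define X₁ = ε₁ and X₂ = B·ε₁ + ε₂. Then the score S₁₂^{(d)} := E[X₁·X₂^{d−1}]·E[X₂²] − E[X₁·X₂]·E[X₂^d] satisfies S₁₂^{(d)} = −B·E[ε₁²]·E[ε₂^d] + Σ_{k=1, k≠d−1}^{d} [ C(d−1, k−1)·B^{k−1}·E[ε₂²] − C(d−1, k)·B^{k+1}·E[ε₁²] ]·E[ε₁^k·ε₂^{d−k}], where C(n, k) denotes the binomial coefficient (with C(n, k) = 0 for k > n). -/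

import Mathlib

open MeasureTheory

/-- Explicit genericity polynomial of the two-variable finite-order LiMIAM model: for
`X₁ = ε₁` and `X₂ = B·ε₁ + ε₂`, under `E[ε₁] = E[ε₂] = 0`, `E[ε₁ε₂] = 0` and
`E[ε₁^{d−1}ε₂] = 0`, the score `S₁₂^{(d)}` expands as
`−B·E[ε₁²]·E[ε₂^d] + Σ_{k=1, k≠d−1}^{d} [C(d−1,k−1)·B^{k−1}·E[ε₂²] −
C(d−1,k)·B^{k+1}·E[ε₁²]]·E[ε₁^k·ε₂^{d−k}]`. -/
theorem stmt_18 {Ω : Type*} [MeasurableSpace Ω] (μ : Measure Ω)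
    [IsProbabilityMeasure μ] (d : ℕ) (hd : 3 ≤ d)
    (ε₁ ε₂ : Ω → ℝ) (h1meas : Measurable ε₁) (h2meas : Measurable ε₂)
    (hm1 : ∫ ω, ε₁ ω ∂μ = 0) (hm2 : ∫ ω, ε₂ ω ∂μ = 0)
    (hd1 : Integrable (fun ω => |ε₁ ω| ^ d) μ)
    (hd2 : Integrable (fun ω => |ε₂ ω| ^ d) μ)
    (hcov : ∫ ω, ε₁ ω * ε₂ ω ∂μ = 0)
    (hmom : ∫ ω, ε₁ ω ^ (d - 1) * ε₂ ω ∂μ = 0)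
    (B : ℝ) :
    (∫ ω, ε₁ ω * (B * ε₁ ω + ε₂ ω) ^ (d - 1) ∂μ) *
        (∫ ω, (B * ε₁ ω + ε₂ ω) ^ 2 ∂μ) -
      (∫ ω, ε₁ ω * (B * ε₁ ω + ε₂ ω) ∂μ) *
        (∫ ω, (B * ε₁ ω + ε₂ ω) ^ d ∂μ) =
    -B * (∫ ω, ε₁ ω ^ 2 ∂μ) * (∫ ω, ε₂ ω ^ d ∂μ) +
      ∑ k ∈ (Finset.Icc 1 d).erase (d - 1),
        (((d - 1).choose (k - 1) : ℝ) * B ^ (k - 1) * (∫ ω, ε₂ ω ^ 2 ∂μ) -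
          ((d - 1).choose k : ℝ) * B ^ (k + 1) * (∫ ω, ε₁ ω ^ 2 ∂μ)) *
        ∫ ω, ε₁ ω ^ k * ε₂ ω ^ (d - k) ∂μ := by
  -- integrability of mixed moments
  have hint : ∀ i j : ℕ, i + j ≤ d →
      Integrable (fun ω => ε₁ ω ^ i * ε₂ ω ^ j) μ := by
    intro i j hij
    have hg : Integrable (fun ω => 2 + |ε₁ ω| ^ d + |ε₂ ω| ^ d) μ :=
      ((integrable_const (2:ℝ)).add hd1).add hd2
    refine hg.mono ?_ ?_
    · exact ((h1meas.pow_const i).mul (h2meas.pow_const j)).aestronglyMeasurable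
    · refine Filter.Eventually.of_forall fun ω => ?_
      have hx : (0:ℝ) ≤ |ε₁ ω| := abs_nonneg _
      have hy : (0:ℝ) ≤ |ε₂ ω| := abs_nonneg _
      have hxd : (0:ℝ) ≤ |ε₁ ω| ^ d := pow_nonneg hx d
      have hyd : (0:ℝ) ≤ |ε₂ ω| ^ d := pow_nonneg hy d
      have h1 : ∀ z : ℝ, 0 ≤ z → z ^ (i + j) ≤ 1 + z ^ d := by
        intro z hz
        rcases le_total z 1 with h | h
        · have h2 : z ^ (i+j) ≤ 1 := pow_le_one₀ hz h
          have := pow_nonneg hz d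
          linarith
        · have h2 : z ^ (i+j) ≤ z ^ d := pow_le_pow_right₀ h hij
          have : (0:ℝ) ≤ 1 := zero_le_one
          linarith
      have key : |ε₁ ω| ^ i * |ε₂ ω| ^ j ≤ 2 + |ε₁ ω| ^ d + |ε₂ ω| ^ d := by
        rcases le_total (|ε₁ ω|) (|ε₂ ω|) with h | h
        · have h2 : |ε₁ ω| ^ i * |ε₂ ω| ^ j ≤ |ε₂ ω| ^ (i + j) := by
            rw [pow_add]
            exact mul_le_mul_of_nonneg_right (pow_le_pow_left₀ hx h i) (pow_nonneg hy j)
          have := h1 _ hy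
          linarith
        · have h2 : |ε₁ ω| ^ i * |ε₂ ω| ^ j ≤ |ε₁ ω| ^ (i + j) := by
            rw [pow_add]
            exact mul_le_mul_of_nonneg_left (pow_le_pow_left₀ hy h j) (pow_nonneg hx i)
          have := h1 _ hx
          linarith
      have hnorm : ‖ε₁ ω ^ i * ε₂ ω ^ j‖ = |ε₁ ω| ^ i * |ε₂ ω| ^ j := by
        rw [Real.norm_eq_abs, abs_mul, abs_pow, abs_pow]
      rw [hnorm, Real.norm_eq_abs]
      calc |ε₁ ω| ^ i * |ε₂ ω| ^ j ≤ 2 + |ε₁ ω| ^ d + |ε₂ ω| ^ d := key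
        _ ≤ |2 + |ε₁ ω| ^ d + |ε₂ ω| ^ d| := le_abs_self _
  have ha : Integrable (fun ω => ε₁ ω ^ 2) μ := by simpa using hint 2 0 (by omega)
  have hb : Integrable (fun ω => ε₁ ω * ε₂ ω) μ := by
    simpa [pow_one] using hint 1 1 (by omega)
  have hc : Integrable (fun ω => ε₂ ω ^ 2) μ := by simpa using hint 0 2 (by omega)
  -- binomial expansion of the moment integrals
  have expand : ∀ a n : ℕ, a + n ≤ d →
      (∫ ω, ε₁ ω ^ a * (B * ε₁ ω + ε₂ ω) ^ n ∂μ)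
        = ∑ k ∈ Finset.range (n+1),
            (n.choose k : ℝ) * B ^ k * ∫ ω, ε₁ ω ^ (a+k) * ε₂ ω ^ (n-k) ∂μ := by
    intro a n han
    have hfun : (fun ω => ε₁ ω ^ a * (B * ε₁ ω + ε₂ ω) ^ n)
        = fun ω => ∑ k ∈ Finset.range (n+1),
            (n.choose k : ℝ) * B ^ k * (ε₁ ω ^ (a+k) * ε₂ ω ^ (n-k)) := by
      funext ω
      rw [add_pow, Finset.mul_sum]
      refine Finset.sum_congr rfl fun k hk => ?_
      rw [mul_pow, pow_add]; ring
    rw [hfun, integral_finset_sum]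
    · exact Finset.sum_congr rfl fun k hk => integral_const_mul _ _
    · intro k hk
      have hk' : k ≤ n := Nat.lt_succ_iff.mp (Finset.mem_range.mp hk)
      exact (hint (a+k) (n-k) (by omega)).const_mul _
  -- the four expansions
  have e1 : (∫ ω, ε₁ ω * (B * ε₁ ω + ε₂ ω) ^ (d-1) ∂μ)
      = ∑ k ∈ Finset.range d,
          ((d-1).choose k : ℝ) * B ^ k * ∫ ω, ε₁ ω ^ (k+1) * ε₂ ω ^ (d-(k+1)) ∂μ := by
    have h := expand 1 (d-1) (by omega)
    have hr : d - 1 + 1 = d := by omega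
    rw [hr] at h
    simpa only [pow_one, Nat.add_comm 1, Nat.sub_sub] using h
  have e2 : (∫ ω, (B * ε₁ ω + ε₂ ω) ^ 2 ∂μ)
      = (∫ ω, ε₂ ω ^ 2 ∂μ) + B ^ 2 * ∫ ω, ε₁ ω ^ 2 ∂μ := by
    have hfun : (fun ω => (B * ε₁ ω + ε₂ ω) ^ 2)
        = fun ω => (B ^ 2 * ε₁ ω ^ 2 + (2*B) * (ε₁ ω * ε₂ ω)) + ε₂ ω ^ 2 := by
      funext ω; ring
    have hI1 : Integrable (fun ω => B ^ 2 * ε₁ ω ^ 2 + 2 * B * (ε₁ ω * ε₂ ω)) μ :=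
      (ha.const_mul _).add (hb.const_mul _)
    have hI2 : Integrable (fun ω => B ^ 2 * ε₁ ω ^ 2) μ := ha.const_mul _
    have hI3 : Integrable (fun ω => 2 * B * (ε₁ ω * ε₂ ω)) μ := hb.const_mul _
    rw [hfun, integral_add hI1 hc, integral_add hI2 hI3, integral_const_mul,
      integral_const_mul, hcov, mul_zero, add_zero]
    ring
  have e3 : (∫ ω, ε₁ ω * (B * ε₁ ω + ε₂ ω) ∂μ) = B * ∫ ω, ε₁ ω ^ 2 ∂μ := by
    have hfun : (fun ω => ε₁ ω * (B * ε₁ ω + ε₂ ω))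
        = fun ω => B * ε₁ ω ^ 2 + ε₁ ω * ε₂ ω := by
      funext ω; ring
    have hI1 : Integrable (fun ω => B * ε₁ ω ^ 2) μ := ha.const_mul _
    rw [hfun, integral_add hI1 hb, integral_const_mul, hcov, add_zero]
  have e4 : (∫ ω, (B * ε₁ ω + ε₂ ω) ^ d ∂μ)
      = ∑ k ∈ Finset.range (d+1),
          (d.choose k : ℝ) * B ^ k * ∫ ω, ε₁ ω ^ k * ε₂ ω ^ (d-k) ∂μ := by
    have h := expand 0 d (by omega)
    simpa only [pow_zero, one_mul, Nat.zero_add] using h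
  -- vanishing moment
  have hN : (∫ ω, ε₁ ω ^ (d-1) * ε₂ ω ^ (d-(d-1)) ∂μ) = 0 := by
    rw [show d - (d-1) = 1 by omega]
    simpa only [pow_one] using hmom
  -- replace the erased sum by the full sum
  have herase : ∑ k ∈ (Finset.Icc 1 d).erase (d - 1),
        (((d - 1).choose (k - 1) : ℝ) * B ^ (k - 1) * (∫ ω, ε₂ ω ^ 2 ∂μ) -
          ((d - 1).choose k : ℝ) * B ^ (k + 1) * (∫ ω, ε₁ ω ^ 2 ∂μ)) *
        ∫ ω, ε₁ ω ^ k * ε₂ ω ^ (d - k) ∂μ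
      = ∑ k ∈ Finset.Icc 1 d,
        (((d - 1).choose (k - 1) : ℝ) * B ^ (k - 1) * (∫ ω, ε₂ ω ^ 2 ∂μ) -
          ((d - 1).choose k : ℝ) * B ^ (k + 1) * (∫ ω, ε₁ ω ^ 2 ∂μ)) *
        ∫ ω, ε₁ ω ^ k * ε₂ ω ^ (d - k) ∂μ := by
    refine Finset.sum_erase _ ?_
    rw [hN, mul_zero]
  rw [e1, e2, e3, e4, herase]
  -- reindex Icc 1 d as range d
  rw [← Finset.Ico_add_one_right_eq_Icc, Finset.sum_Ico_eq_sum_range]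
  simp only [Nat.add_sub_cancel, Nat.add_sub_cancel_left]
  -- peel off k = 0 from the range (d+1) sum
  rw [Finset.sum_range_succ']
  simp only [Nat.choose_zero_right, Nat.cast_one, pow_zero, one_mul, Nat.sub_zero]
  simp only [Nat.add_comm 1]
  -- now pure algebra of finite sums
  have key : ∀ k ∈ Finset.range d,
      ((((d-1).choose k : ℝ)) * B ^ k * (∫ ω, ε₂ ω ^ 2 ∂μ)
          - ((d-1).choose (k+1) : ℝ) * B ^ (k+1+1) * (∫ ω, ε₁ ω ^ 2 ∂μ)) *
        (∫ ω, ε₁ ω ^ (k+1) * ε₂ ω ^ (d-(k+1)) ∂μ)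
      = (((d-1).choose k : ℝ) * B ^ k * (∫ ω, ε₁ ω ^ (k+1) * ε₂ ω ^ (d-(k+1)) ∂μ))
          * ((∫ ω, ε₂ ω ^ 2 ∂μ) + B ^ 2 * ∫ ω, ε₁ ω ^ 2 ∂μ)
        - (B * ∫ ω, ε₁ ω ^ 2 ∂μ) *
            ((d.choose (k+1) : ℝ) * B ^ (k+1) * ∫ ω, ε₁ ω ^ (k+1) * ε₂ ω ^ (d-(k+1)) ∂μ) := by
    intro k _
    have hp : d.choose (k+1) = (d-1).choose k + (d-1).choose (k+1) := by
      rw [show d = (d-1)+1 by omega]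
      exact Nat.choose_succ_succ _ _
    rw [hp]
    push_cast
    ring
  rw [Finset.sum_congr rfl key, Finset.sum_sub_distrib, ← Finset.sum_mul, ← Finset.mul_sum]
  ring
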